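/- Let (F ∪ C, d) be a metric space and 0 < ε < 1/10. If X, Y are nonempty subsets of F and there is a client c that is both X-exclusive and Y-exclusive, then X = Y. -/
import Mathlib


/-- A client `c` is `X`-exclusive (w.r.t. facility set `F` and parameter `ε`):
`X` is a nonempty subset of `F`, (i) `d(f₁,f₂) ≤ ε·d(c,X)` for all `f₁,f₂ ∈ X`
(equivalently `d(f₁,f₂) ≤ ε·d(c,f)` for every `f ∈ X`), and
(ii) `max_{f'∈X} d(c,f') ≤ ε·d(c,f)` for every `f ∈ F \ X`. -/
def Exclusive {V : Type*} [MetricSpace V] (ε : ℝ) (F : Finset V) (c : V)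
    (X : Finset V) : Prop :=
  X ⊆ F ∧ X.Nonempty ∧
  (∀ f1 ∈ X, ∀ f2 ∈ X, ∀ f ∈ X, dist f1 f2 ≤ ε * dist c f) ∧
  (∀ f ∈ F, f ∉ X → ∀ f' ∈ X, dist c f' ≤ ε * dist c f)

lemma exclusive_subset {V : Type*} [MetricSpace V] (F : Finset V) (ε : ℝ)
    (hε0 : 0 < ε) (hε1 : ε < 1 / 10)
    (c : V) (X Y : Finset V)
    (hX : Exclusive ε F c X) (hY : Exclusive ε F c Y) :
    X ⊆ Y := by
  obtain ⟨hXF, hXne, hXi, hXii⟩ := hX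
  obtain ⟨hYF, hYne, hYi, hYii⟩ := hY
  intro f hfX
  by_contra hfY
  obtain ⟨g, hgY⟩ := hYne
  have h2 : dist c g ≤ ε * dist c f := hYii f (hXF hfX) hfY g hgY
  by_cases hgX : g ∈ X
  · have h1 : dist f g ≤ ε * dist c f := hXi f hfX g hgX f hfX
    have htri : dist c f ≤ dist c g + dist g f := dist_triangle c g f
    have hfg : dist g f = dist f g := dist_comm g f
    have hd0 : dist c f ≤ 0 := by nlinarith [dist_nonneg (x := c) (y := f)]
    have hcf : c = f := by
      have := le_antisymm hd0 dist_nonneg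
      exact dist_eq_zero.mp this
    have hcg : c = g := by
      have : dist c g ≤ 0 := by nlinarith
      exact dist_eq_zero.mp (le_antisymm this dist_nonneg)
    exact hfY (hcf ▸ hcg ▸ hgY)
  · have h1 : dist c f ≤ ε * dist c g := hXii g (hYF hgY) hgX f hfX
    have h3 : dist c f ≤ ε * (ε * dist c f) :=
      h1.trans (mul_le_mul_of_nonneg_left h2 hε0.le)
    have hε2 : ε * ε < 1 := by nlinarith
    have hd0 : dist c f ≤ 0 := by nlinarith
    have hcf : c = f := dist_eq_zero.mp (le_antisymm hd0 dist_nonneg)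
    have hcg : c = g := by
      have : dist c g ≤ 0 := by nlinarith
      exact dist_eq_zero.mp (le_antisymm this dist_nonneg)
    exact hgX (hcg ▸ hcf ▸ hfX)

/-- If a client is both `X`-exclusive and `Y`-exclusive, then `X = Y`. -/
theorem stmt8 {V : Type*} [MetricSpace V] (F : Finset V) (ε : ℝ)
    (hε0 : 0 < ε) (hε1 : ε < 1 / 10)
    (c : V) (X Y : Finset V)
    (hX : Exclusive ε F c X) (hY : Exclusive ε F c Y) :
    X = Y := by
  exact le_antisymm (exclusive_subset F ε hε0 hε1 c X Y hX hY)
    (exclusive_subset F ε hε0 hε1 c Y X hY hX)
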